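/- arXiv:2204.10051 — 2 statements merged into one kernel-verified Lean document; each statement's English description precedes it below -/
import Mathlib

section
/- Suppose x satisfies the regularity assumption. Then for every real n > 1 and every ξ ∈ ℝ, the series σ^{(n)}(ξ,a) = a ∑_{k=1}^∞ G_n(ka;ξ) converges absolutely for each a > 0, and lim_{a→0⁺} a^{n−1} σ^{(n)}(ξ,a) = −(n+1) ζ(n) x''(ξ) x'(ξ)^{−(n+2)}. -/
open Real Filter Topology MeasureTheory

/-- The real value of the Riemann zeta function (analytically continued). -/
noncomputable def zetaR (s : ℝ) : ℝ := (riemannZeta (s : ℂ)).re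

/-- `G_s(h; ξ) = (x(ξ+h) - x(ξ))^{-(s+1)} - (x(ξ) - x(ξ-h))^{-(s+1)}`. -/
noncomputable def Gfun (x : ℝ → ℝ) (s ξ h : ℝ) : ℝ :=
  (x (ξ + h) - x ξ) ^ (-(s + 1)) - (x ξ - x (ξ - h)) ^ (-(s + 1))

/-- `σ^{(s)}(ξ, a) = a ∑_{k=1}^∞ G_s(k a; ξ)`. -/
noncomputable def sigmaFun (x : ℝ → ℝ) (s ξ a : ℝ) : ℝ :=
  a * ∑' k : ℕ, Gfun x s ξ (((k : ℝ) + 1) * a)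

/-- The regularity assumption on the vicinal surface `x`:
real analyticity, globally converging Taylor expansions, and `inf x' > 0`. -/
def RegularSurface (x : ℝ → ℝ) : Prop :=
  (∀ ξ : ℝ, AnalyticAt ℝ x ξ) ∧
  (∀ ξ h : ℝ,
    HasSum (fun j : ℕ => iteratedDeriv j x ξ / (Nat.factorial j : ℝ) * h ^ j) (x (ξ + h))) ∧
  (∃ p₀ : ℝ, 0 < p₀ ∧ ∀ h : ℝ, p₀ ≤ deriv x h)

theorem stmt_0 (x : ℝ → ℝ) (hx : RegularSurface x) (n : ℝ) (hn : 1 < n) (ξ : ℝ) :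
    (∀ a : ℝ, 0 < a → Summable (fun k : ℕ => |Gfun x n ξ (((k : ℝ) + 1) * a)|)) ∧
    Tendsto (fun a : ℝ => a ^ (n - 1) * sigmaFun x n ξ a) (𝓝[>] (0 : ℝ))
      (𝓝 (-(n + 1) * zetaR n * deriv (deriv x) ξ * (deriv x ξ) ^ (-(n + 2)))) := by
  obtain ⟨hxan, -, p₀, hp₀, hp₀le⟩ := hx
  have hdiff : Differentiable ℝ x := fun t => (hxan t).differentiableAt
  -- mean value lower bound
  have hmono : ∀ u v : ℝ, u ≤ v → p₀ * (v - u) ≤ x v - x u := by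
    intro u v huv
    have h1 : Monotone (fun t => x t - p₀ * t) := by
      apply monotone_of_deriv_nonneg
      · exact hdiff.sub ((differentiable_id.const_mul _))
      · intro t
        have hd : HasDerivAt (fun t => x t - p₀ * t) (deriv x t - p₀ * 1) t :=
          (hdiff t).hasDerivAt.sub ((hasDerivAt_id t).const_mul p₀)
        rw [hd.deriv]
        have := hp₀le t
        linarith
    have := h1 huv
    simp only at this
    linarith
  have hA : ∀ h : ℝ, 0 < h → p₀ * h ≤ x (ξ + h) - x ξ := by
    intro h hh
    have := hmono ξ (ξ + h) (by linarith)
    simpa using this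
  have hB : ∀ h : ℝ, 0 < h → p₀ * h ≤ x ξ - x (ξ - h) := by
    intro h hh
    have := hmono (ξ - h) ξ (by linarith)
    simpa using this
  -- global bound on G
  have hGb : ∀ h : ℝ, 0 < h → |Gfun x n ξ h| ≤ (p₀ * h) ^ (-(n + 1)) := by
    intro h hh
    have hph : (0:ℝ) < p₀ * h := by positivity
    have h1 : (x (ξ + h) - x ξ) ^ (-(n + 1)) ≤ (p₀ * h) ^ (-(n + 1)) :=
      Real.rpow_le_rpow_of_nonpos hph (hA h hh) (by linarith)
    have h2 : (x ξ - x (ξ - h)) ^ (-(n + 1)) ≤ (p₀ * h) ^ (-(n + 1)) :=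
      Real.rpow_le_rpow_of_nonpos hph (hB h hh) (by linarith)
    have h3 : (0:ℝ) ≤ (x (ξ + h) - x ξ) ^ (-(n + 1)) :=
      Real.rpow_nonneg (by nlinarith [hA h hh]) _
    have h4 : (0:ℝ) ≤ (x ξ - x (ξ - h)) ^ (-(n + 1)) :=
      Real.rpow_nonneg (by nlinarith [hB h hh]) _
    rw [Gfun, abs_le]
    constructor <;> linarith
  -- summability of the basic series
  have hsum : ∀ e : ℝ, e < -1 → Summable (fun k : ℕ => ((k:ℝ) + 1) ^ e) := by
    intro e he
    have := (summable_nat_add_iff (f := fun k : ℕ => (k:ℝ) ^ e) 1).mpr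
      (Real.summable_nat_rpow.mpr he)
    apply this.congr
    intro k
    push_cast
    ring_nf
  have hn1 : -(n + 1) < -1 := by linarith
  have hnn : -n < -1 := by linarith
  have part1 : ∀ a : ℝ, 0 < a → Summable (fun k : ℕ => |Gfun x n ξ (((k : ℝ) + 1) * a)|) := by
    intro a ha
    apply Summable.of_nonneg_of_le (fun k => abs_nonneg _)
      (f := fun k : ℕ => (p₀ * a) ^ (-(n+1)) * ((k:ℝ) + 1) ^ (-(n+1)))
    · intro k
      have hk : (0:ℝ) < (k:ℝ) + 1 := by positivity
      have := hGb (((k:ℝ) + 1) * a) (by positivity)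
      calc |Gfun x n ξ (((k:ℝ) + 1) * a)| ≤ (p₀ * (((k:ℝ) + 1) * a)) ^ (-(n+1)) := this
        _ = (p₀ * a) ^ (-(n+1)) * ((k:ℝ) + 1) ^ (-(n+1)) := by
            rw [← Real.mul_rpow (by positivity) (by positivity)]
            ring_nf
    · exact (hsum _ hn1).mul_left _
  -- zeta as a sum
  have hzeta : zetaR n = ∑' k : ℕ, ((k:ℝ) + 1) ^ (-n) := by
    have h1 : riemannZeta (n:ℂ) = ∑' k : ℕ, 1 / ((k:ℂ) + 1) ^ (n:ℂ) :=
      zeta_eq_tsum_one_div_nat_add_one_cpow (by simpa using hn)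
    have h2 : ∀ k : ℕ, (1 : ℂ) / ((k:ℂ) + 1) ^ (n:ℂ) = ((((k:ℝ) + 1) ^ (-n) : ℝ) : ℂ) := by
      intro k
      have hk : (0:ℝ) ≤ (k:ℝ) + 1 := by positivity
      rw [Real.rpow_neg hk, Complex.ofReal_inv, Complex.ofReal_cpow hk]
      push_cast
      rw [one_div]
    rw [zetaR, h1]
    simp only [h2]
    rw [← Complex.ofReal_tsum]
    exact Complex.ofReal_re _
  -- the analytic setup
  set y : ℝ → ℝ := fun h => x (ξ + h) with hy
  have hyan : AnalyticAt ℝ y 0 := by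
    have := (hxan (ξ + 0)).comp ((analyticAt_const (v := ξ)).add analyticAt_id)
    simpa [Function.comp_def] using this
  obtain ⟨p, hp⟩ := hyan
  set P : ℝ → ℝ := dslope y 0 with hPdef
  have hP : HasFPowerSeriesAt P p.fslope 0 := hp.has_fpower_series_dslope_fslope
  have hderiv_y : ∀ h : ℝ, deriv y h = deriv x (ξ + h) := fun h => deriv_comp_const_add x ξ h
  have hP0 : P 0 = deriv x ξ := by
    rw [hPdef, dslope_same, hderiv_y, add_zero]
  have hx'pos : 0 < deriv x ξ := lt_of_lt_of_le hp₀ (hp₀le ξ)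
  have hPderiv : HasDerivAt P (p.coeff 2) 0 := by
    have h1 := hP.hasDerivAt
    have h2 : (p.fslope 1 fun _ => (1:ℝ)) = p.coeff 2 := by
      rw [show (p.fslope 1 fun _ => (1:ℝ)) = p.fslope.coeff 1 from rfl,
        FormalMultilinearSeries.coeff_fslope]
    rwa [h2] at h1
  have hc2 : 2 * p.coeff 2 = deriv (deriv x) ξ := by
    obtain ⟨r, hball⟩ := hp
    have h1 := hball.factorial_smul (1:ℝ) 2
    have h2 : (p 2 fun _ => (1:ℝ)) = p.coeff 2 := rfl
    rw [h2, ← iteratedDeriv_eq_iteratedFDeriv] at h1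
    have h3 : iteratedDeriv 2 y 0 = deriv (deriv x) ξ := by
      rw [iteratedDeriv_succ, iteratedDeriv_one]
      have h4 : deriv y = fun h => deriv x (ξ + h) := funext hderiv_y
      rw [h4, deriv_comp_const_add, add_zero]
    rw [h3] at h1
    rw [← h1]
    norm_num
  -- identities for h * P h
  have hmulP : ∀ h : ℝ, h * P h = x (ξ + h) - x ξ := by
    intro h
    have := sub_smul_dslope y 0 h
    simpa [smul_eq_mul, hy] using this
  have hmulPneg : ∀ h : ℝ, h * P (-h) = x ξ - x (ξ - h) := by
    intro h
    have h1 : (-h - 0) • dslope y 0 (-h) = y (-h) - y 0 := sub_smul_dslope y 0 (-h)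
    rw [← hPdef] at h1
    have h2 : y (-h) = x (ξ - h) := by simp [hy, sub_eq_add_neg]
    have h3 : y 0 = x ξ := by simp [hy]
    rw [h2, h3, sub_zero, smul_eq_mul] at h1
    linarith
  set c : ℝ := p.coeff 2 * (-(n+1)) * (deriv x ξ) ^ (-(n+1) - 1) with hc
  set F : ℝ → ℝ := fun h => (P h) ^ (-(n+1)) with hF
  have hFd : HasDerivAt F c 0 := by
    have := hPderiv.rpow_const (p := -(n+1)) (Or.inl (by rw [hP0]; exact ne_of_gt hx'pos))
    rwa [hP0] at this
  -- symmetric difference quotient limit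
  have hslope : Tendsto (slope F 0) (𝓝[≠] (0:ℝ)) (𝓝 c) := hasDerivAt_iff_tendsto_slope.mp hFd
  have hmem1 : 𝓝[>] (0:ℝ) ≤ 𝓝[≠] (0:ℝ) :=
    nhdsWithin_mono 0 (fun t ht => ne_of_gt ht)
  have hneg : Tendsto (fun h : ℝ => -h) (𝓝[>] (0:ℝ)) (𝓝[≠] (0:ℝ)) := by
    apply tendsto_nhdsWithin_of_tendsto_nhds_of_eventually_within
    · have : Tendsto (fun h : ℝ => -h) (𝓝 (0:ℝ)) (𝓝 (-0 : ℝ)) := tendsto_neg 0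
      rw [neg_zero] at this
      exact this.mono_left nhdsWithin_le_nhds
    · filter_upwards [self_mem_nhdsWithin] with t ht
      simp only [Set.mem_compl_iff, Set.mem_singleton_iff]
      intro hc'
      rw [neg_eq_zero] at hc'
      exact (ne_of_gt ht) hc'
  have hsymgen : ∀ (G : ℝ → ℝ) (d : ℝ), HasDerivAt G d 0 →
      Tendsto (fun h : ℝ => (G h - G (-h)) / h) (𝓝[>] (0:ℝ)) (𝓝 (d + d)) := by
    intro G d hGd
    have hslopeG : Tendsto (slope G 0) (𝓝[≠] (0:ℝ)) (𝓝 d) := hasDerivAt_iff_tendsto_slope.mp hGd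
    have h1 := (hslopeG.mono_left hmem1).add (hslopeG.comp hneg)
    apply h1.congr'
    filter_upwards [self_mem_nhdsWithin] with h hh
    have hh' : (h:ℝ) ≠ 0 := ne_of_gt hh
    simp only [Function.comp_apply, slope_def_field, sub_zero]
    rw [div_neg, ← sub_eq_add_neg, div_sub_div_same]
    congr 1
    ring
  have hsym := hsymgen F c hFd
  -- key identity
  have e3 : ∀ h : ℝ, 0 < h → ∀ Z : ℝ, h ^ n * (h ^ (-(n+1)) * Z) = Z / h := by
    intro h hh Z
    rw [← mul_assoc, ← Real.rpow_add hh, (by ring : n + -(n+1) = -1), Real.rpow_neg_one,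
      inv_mul_eq_div]
  have hkey : ∀ h : ℝ, 0 < h → h ^ n * Gfun x n ξ h = (F h - F (-h)) / h := by
    intro h hh
    have hPh : 0 < P h := by nlinarith [hmulP h, hA h hh, mul_pos hp₀ hh]
    have hPnh : 0 < P (-h) := by nlinarith [hmulPneg h, hB h hh, mul_pos hp₀ hh]
    have e1 : x (ξ + h) - x ξ = h * P h := (hmulP h).symm
    have e2 : x ξ - x (ξ - h) = h * P (-h) := (hmulPneg h).symm
    rw [Gfun, e1, e2, Real.mul_rpow hh.le hPh.le, Real.mul_rpow hh.le hPnh.le, mul_sub,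
      e3 h hh, e3 h hh]
    simp only [hF]
    rw [div_sub_div_same]
  have hgt : Tendsto (fun h : ℝ => h ^ n * Gfun x n ξ h) (𝓝[>] (0:ℝ)) (𝓝 (c + c)) := by
    apply hsym.congr'
    filter_upwards [self_mem_nhdsWithin] with h hh
    exact (hkey h hh).symm
  -- global bound
  have hev : ∀ᶠ h in 𝓝[>] (0:ℝ), |h ^ n * Gfun x n ξ h| < |c + c| + 1 :=
    hgt.abs.eventually_lt_const (by linarith [abs_nonneg (c+c)])
  obtain ⟨δ, hδmem, hδ⟩ := mem_nhdsGT_iff_exists_Ioo_subset.mp hev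
  have hδ0 : (0:ℝ) < δ := hδmem
  have hdecay : ∀ h : ℝ, 0 < h → |h ^ n * Gfun x n ξ h| ≤ p₀ ^ (-(n+1)) * h⁻¹ := by
    intro h hh
    have h2 : (0:ℝ) ≤ h ^ n := Real.rpow_nonneg hh.le n
    rw [abs_mul, abs_of_nonneg h2]
    calc h ^ n * |Gfun x n ξ h| ≤ h ^ n * (p₀ * h) ^ (-(n+1)) :=
          mul_le_mul_of_nonneg_left (hGb h hh) h2
      _ = (h ^ n * h ^ (-(n+1))) * p₀ ^ (-(n+1)) := by
          rw [Real.mul_rpow hp₀.le hh.le]; ring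
      _ = p₀ ^ (-(n+1)) * h⁻¹ := by
          rw [← Real.rpow_add hh, (by ring : n + -(n+1) = -1), Real.rpow_neg_one]; ring
  set M : ℝ := max (|c + c| + 1) (p₀ ^ (-(n+1)) * δ⁻¹) with hM
  have hMb : ∀ h : ℝ, 0 < h → |h ^ n * Gfun x n ξ h| ≤ M := by
    intro h hh
    rcases lt_or_ge h δ with hlt | hge
    · exact le_trans (hδ ⟨hh, hlt⟩).le (le_max_left _ _)
    · refine le_trans (le_trans (hdecay h hh) ?_) (le_max_right _ _)
      apply mul_le_mul_of_nonneg_left _ (Real.rpow_nonneg hp₀.le _)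
      exact inv_anti₀ hδ0 hge
  -- dominated convergence
  have hterm : ∀ k : ℕ, Tendsto (fun a : ℝ => a ^ n * Gfun x n ξ (((k:ℝ) + 1) * a))
      (𝓝[>] (0:ℝ)) (𝓝 (((k:ℝ) + 1) ^ (-n) * (c + c))) := by
    intro k
    have hk : (0:ℝ) < (k:ℝ) + 1 := by positivity
    have hmap : Tendsto (fun a : ℝ => ((k:ℝ) + 1) * a) (𝓝[>] (0:ℝ)) (𝓝[>] (0:ℝ)) := by
      apply tendsto_nhdsWithin_of_tendsto_nhds_of_eventually_within
      · have h0 : Tendsto (fun a : ℝ => ((k:ℝ) + 1) * a) (𝓝[>] (0:ℝ)) (𝓝 (((k:ℝ)+1) * 0)) :=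
          (tendsto_id.const_mul _).mono_left nhdsWithin_le_nhds
        simpa using h0
      · filter_upwards [self_mem_nhdsWithin] with a ha
        exact mul_pos hk ha
    have h1 := (tendsto_const_nhds (x := ((k:ℝ) + 1) ^ (-n))).mul (hgt.comp hmap)
    apply h1.congr'
    filter_upwards [self_mem_nhdsWithin] with a ha
    simp only [Function.comp_apply]
    rw [← mul_assoc, Real.mul_rpow hk.le ha.le, ← mul_assoc, ← Real.rpow_add hk]
    norm_num
  have hbound : ∀ᶠ a in 𝓝[>] (0:ℝ), ∀ k : ℕ,
      ‖a ^ n * Gfun x n ξ (((k:ℝ) + 1) * a)‖ ≤ M * ((k:ℝ) + 1) ^ (-n) := by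
    filter_upwards [self_mem_nhdsWithin] with a ha
    intro k
    have hk : (0:ℝ) < (k:ℝ) + 1 := by positivity
    have h1 := hMb (((k:ℝ)+1) * a) (mul_pos hk ha)
    have e : a ^ n * Gfun x n ξ (((k:ℝ)+1)*a)
        = ((k:ℝ)+1) ^ (-n) * ((((k:ℝ)+1)*a) ^ n * Gfun x n ξ (((k:ℝ)+1)*a)) := by
      rw [← mul_assoc, Real.mul_rpow hk.le ha.le, ← mul_assoc, ← Real.rpow_add hk]
      norm_num
    rw [Real.norm_eq_abs, e, abs_mul, abs_of_nonneg (Real.rpow_nonneg hk.le _), mul_comm M]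
    exact mul_le_mul_of_nonneg_left h1 (Real.rpow_nonneg hk.le _)
  have hdom := tendsto_tsum_of_dominated_convergence ((hsum _ hnn).mul_left M) hterm hbound
  refine ⟨part1, ?_⟩
  have hval : (∑' k : ℕ, ((k:ℝ) + 1) ^ (-n) * (c + c)) =
      -(n + 1) * zetaR n * deriv (deriv x) ξ * (deriv x ξ) ^ (-(n + 2)) := by
    rw [tsum_mul_right, ← hzeta, ← hc2, hc,
      show (-(n+1) - 1 : ℝ) = -(n+2) from by ring]
    ring
  rw [← hval]
  apply hdom.congr'
  filter_upwards [self_mem_nhdsWithin] with a ha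
  rw [sigmaFun, ← mul_assoc, ← Real.rpow_add_one (ne_of_gt ha), sub_add_cancel, tsum_mul_left]
end

section
/- Let −1 < m < 1. Then: (i) for every w ∈ (0,1) the series defining D_m(w) converges absolutely, and D_m(w) > 0 for all w ∈ (0,1/2); (ii) the function K_m is nonnegative, even, 1-periodic, and strictly decreasing on (0,1/2), and satisfies K_m(z) = K_m(1−z) for z ∈ (0,1); (iii) K_m is integrable on Ω, i.e. K_m ∈ L¹(Ω); (iv) if in addition −1 < m ≤ 0, then K_m ∈ L²(Ω). -/
open Real Filter Topology MeasureTheory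

/-- The periodic cell `Ω = [-1/2, 1/2]`. -/
noncomputable def Omega : Set ℝ := Set.Icc (-(1/2) : ℝ) (1/2)

/-- `D_m(w) = ∑_{k=0}^∞ [(k+w)^{-(m+1)} - (k+1-w)^{-(m+1)}]` for `w ∈ (0,1)`,
extended `1`-periodically (via the fractional part). -/
noncomputable def Dm (m w : ℝ) : ℝ :=
  ∑' k : ℕ, (((k : ℝ) + Int.fract w) ^ (-(m + 1)) - ((k : ℝ) + 1 - Int.fract w) ^ (-(m + 1)))

/-- `K_m(z) = ∫_z^{1/2} D_m(w) dw` for `z ∈ (0,1/2]`, extended to an even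
`1`-periodic function on `ℝ` (here `|z - round z|` is the distance of `z` to `ℤ`). -/
noncomputable def Km (m z : ℝ) : ℝ :=
  ∫ w in Set.Ioc (|z - (round z : ℝ)|) (1/2 : ℝ), Dm m w


section helpers_stmt6

variable {m : ℝ}


lemma rpow_anti {p x y : ℝ} (hp : p ≤ 0) (hx : 0 < x) (hxy : x ≤ y) : y ^ p ≤ x ^ p :=
  Real.rpow_le_rpow_of_nonpos hx hxy hp

lemma tele_summable {p : ℝ} (hp : p ≤ 0) :
    Summable (fun k : ℕ => ((k : ℝ) + 1) ^ p - ((k : ℝ) + 2) ^ p) := by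
  apply summable_of_sum_range_le (c := 1)
  · intro n
    have := rpow_anti hp (x := (n : ℝ) + 1) (y := (n : ℝ) + 2) (by positivity) (by linarith)
    linarith
  · intro n
    have h := Finset.sum_range_sub' (fun i : ℕ => ((i : ℝ) + 1) ^ p) n
    push_cast at h
    simp only [show ∀ x:ℝ, x + 1 + 1 = x + 2 from fun x => by ring] at h
    rw [h]
    have h0 : ((0 : ℝ) + 1) ^ p = 1 := by norm_num
    have h1 : (0:ℝ) ≤ ((n : ℝ) + 1) ^ p := Real.rpow_nonneg (by positivity) _
    linarith

lemma tele_tsum_le {p : ℝ} (hp : p ≤ 0) :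
    ∑' k : ℕ, (((k : ℝ) + 1) ^ p - ((k : ℝ) + 2) ^ p) ≤ 1 := by
  apply Real.tsum_le_of_sum_range_le
  · intro n
    have := rpow_anti hp (x := (n : ℝ) + 1) (y := (n : ℝ) + 2) (by positivity) (by linarith)
    linarith
  · intro n
    have h := Finset.sum_range_sub' (fun i : ℕ => ((i : ℝ) + 1) ^ p) n
    push_cast at h
    simp only [show ∀ x:ℝ, x + 1 + 1 = x + 2 from fun x => by ring] at h
    rw [h]
    have h0 : ((0 : ℝ) + 1) ^ p = 1 := by norm_num
    have h1 : (0:ℝ) ≤ ((n : ℝ) + 1) ^ p := Real.rpow_nonneg (by positivity) _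
    linarith

lemma key_bound {p K w : ℝ} (hp : p ≤ 0) (hK : 1 ≤ K) (hw0 : 0 ≤ w) (hw1 : w ≤ 1) :
    |(K + w) ^ p - (K + 1 - w) ^ p| ≤ K ^ p - (K + 1) ^ p := by
  have hK0 : (0:ℝ) < K := by linarith
  have h1 : (K + w) ^ p ≤ K ^ p := rpow_anti hp hK0 (by linarith)
  have h2 : (K + 1) ^ p ≤ (K + w) ^ p := rpow_anti hp (by linarith) (by linarith)
  have h3 : (K + 1 - w) ^ p ≤ K ^ p := rpow_anti hp hK0 (by linarith)
  have h4 : (K + 1) ^ p ≤ (K + 1 - w) ^ p := rpow_anti hp (by linarith) (by linarith)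
  rw [abs_sub_le_iff]
  constructor <;> linarith

lemma abs_summable_gen (hm : -1 < m) {w : ℝ} (hw0 : 0 < w) (hw1 : w < 1) :
    Summable (fun k : ℕ =>
      |((k : ℝ) + w) ^ (-(m + 1)) - ((k : ℝ) + 1 - w) ^ (-(m + 1))|) := by
  set p := -(m + 1) with hpdef
  have hp : p ≤ 0 := by rw [hpdef]; linarith
  rw [← summable_nat_add_iff 1]
  refine Summable.of_nonneg_of_le (fun n => abs_nonneg _) (fun n => ?_) (tele_summable hp)
  have := key_bound (K := (n : ℝ) + 1) (w := w) hp (by linarith) hw0.le hw1.le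
  push_cast
  calc |((n : ℝ) + 1 + w) ^ p - ((n : ℝ) + 1 + 1 - w) ^ p|
      ≤ ((n:ℝ)+1) ^ p - ((n:ℝ)+1+1) ^ p := by
        convert this using 3
    _ = ((n:ℝ)+1) ^ p - ((n:ℝ)+2) ^ p := by ring_nf

lemma summable_term (hm : -1 < m) (w : ℝ) :
    Summable (fun k : ℕ =>
      ((k : ℝ) + Int.fract w) ^ (-(m + 1)) - ((k : ℝ) + 1 - Int.fract w) ^ (-(m + 1))) := by
  set p := -(m + 1) with hpdef
  have hp : p ≤ 0 := by rw [hpdef]; linarith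
  rcases eq_or_lt_of_le (Int.fract_nonneg w) with h | h
  · rw [← h]
    rw [← summable_nat_add_iff 1]
    refine (tele_summable hp).congr fun n => ?_
    push_cast
    ring_nf
  · exact (abs_summable_gen hm h (Int.fract_lt_one w)).of_abs

lemma term_nonneg (hm : -1 < m) {w : ℝ} (hw0 : 0 < w) (hw1 : w ≤ 1/2) (k : ℕ) :
    0 ≤ ((k : ℝ) + w) ^ (-(m + 1)) - ((k : ℝ) + 1 - w) ^ (-(m + 1)) := by
  have := rpow_anti (p := -(m+1)) (by linarith) (x := (k:ℝ) + w) (y := (k:ℝ) + 1 - w)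
    (by positivity) (by linarith)
  linarith

lemma fract_eq_self_of {w : ℝ} (hw0 : 0 ≤ w) (hw1 : w < 1) : Int.fract w = w :=
  Int.fract_eq_self.2 ⟨hw0, hw1⟩

lemma Dm_nonneg (hm : -1 < m) {w : ℝ} (hw0 : 0 < w) (hw1 : w ≤ 1/2) : 0 ≤ Dm m w := by
  rw [Dm, fract_eq_self_of hw0.le (by linarith)]
  exact tsum_nonneg (term_nonneg hm hw0 hw1)

lemma Dm_pos (hm : -1 < m) {w : ℝ} (hw0 : 0 < w) (hw1 : w < 1/2) : 0 < Dm m w := by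
  rw [Dm, fract_eq_self_of hw0.le (by linarith)]
  have hs : Summable (fun k : ℕ =>
      ((k : ℝ) + w) ^ (-(m + 1)) - ((k : ℝ) + 1 - w) ^ (-(m + 1))) :=
    (abs_summable_gen hm hw0 (by linarith)).of_abs
  refine Summable.tsum_pos hs (term_nonneg hm hw0 hw1.le) 0 ?_
  have := Real.rpow_lt_rpow_of_neg (x := (0:ℝ) + w) (y := (0:ℝ) + 1 - w)
    (by linarith) (by linarith) (z := -(m+1)) (by linarith)
  push_cast
  linarith

lemma le_Dm (hm : -1 < m) {w : ℝ} (hw0 : 0 < w) (hw1 : w < 1/2) :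
    w ^ (-(m+1)) - (1 - w) ^ (-(m+1)) ≤ Dm m w := by
  rw [Dm, fract_eq_self_of hw0.le (by linarith)]
  have hs : Summable (fun k : ℕ =>
      ((k : ℝ) + w) ^ (-(m + 1)) - ((k : ℝ) + 1 - w) ^ (-(m + 1))) :=
    (abs_summable_gen hm hw0 (by linarith)).of_abs
  have := Summable.le_tsum hs 0 (fun j _ => term_nonneg hm hw0 hw1.le j)
  simpa using this

lemma Dm_le (hm : -1 < m) {w : ℝ} (hw0 : 0 < w) (hw1 : w ≤ 1/2) :
    Dm m w ≤ w ^ (-(m+1)) + 1 := by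
  set p := -(m + 1) with hpdef
  have hp : p ≤ 0 := by rw [hpdef]; linarith
  rw [Dm, fract_eq_self_of hw0.le (by linarith)]
  have hs : Summable (fun k : ℕ => ((k : ℝ) + w) ^ p - ((k : ℝ) + 1 - w) ^ p) :=
    (abs_summable_gen hm hw0 (by linarith)).of_abs
  rw [Summable.tsum_eq_zero_add hs]
  have h0 : ((0:ℝ) + w) ^ p - ((0:ℝ) + 1 - w) ^ p ≤ w ^ p := by
    have : (0:ℝ) ≤ ((0:ℝ) + 1 - w) ^ p := Real.rpow_nonneg (by linarith) _
    have e : ((0:ℝ) + w) ^ p = w ^ p := by norm_num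
    linarith
  have h1 : ∑' k : ℕ, ((((k+1 : ℕ) : ℝ) + w) ^ p - (((k+1 : ℕ) : ℝ) + 1 - w) ^ p) ≤ 1 := by
    have hsum1 : Summable (fun k : ℕ => (((k+1 : ℕ) : ℝ) + w) ^ p - (((k+1 : ℕ) : ℝ) + 1 - w) ^ p) :=
      (summable_nat_add_iff 1).2 hs
    calc ∑' k : ℕ, ((((k+1 : ℕ) : ℝ) + w) ^ p - (((k+1 : ℕ) : ℝ) + 1 - w) ^ p)
        ≤ ∑' k : ℕ, (((k : ℝ) + 1) ^ p - ((k : ℝ) + 2) ^ p) := by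
          refine Summable.tsum_le_tsum (fun k => ?_) hsum1 (tele_summable hp)
          have hb := key_bound (K := (k : ℝ) + 1) (w := w) hp (by linarith) hw0.le (by linarith)
          rw [abs_sub_le_iff] at hb
          push_cast
          have e1 : ((k:ℝ) + 1 + 1) = (k:ℝ) + 2 := by ring
          calc ((k:ℝ) + 1 + w) ^ p - ((k:ℝ) + 1 + 1 - w) ^ p
              ≤ ((k:ℝ)+1) ^ p - ((k:ℝ)+1+1) ^ p := by
                have := hb.1; linarith [this]
            _ = ((k:ℝ)+1) ^ p - ((k:ℝ)+2) ^ p := by rw [e1]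
      _ ≤ 1 := tele_tsum_le hp
  push_cast at h0 h1 ⊢
  linarith

lemma measurable_rpow_const (p : ℝ) : Measurable fun x : ℝ => x ^ p := by
  have h : (fun x : ℝ => x ^ p) = fun x => if x = 0 then (if p = 0 then (1:ℝ) else 0)
      else (Real.exp (Real.log x * p) * if x < 0 then Real.cos (p * π) else 1) := by
    funext x
    rcases lt_trichotomy x 0 with hx | hx | hx
    · rw [Real.rpow_def_of_neg hx, if_neg hx.ne, if_pos hx]
    · subst hx
      rcases eq_or_ne p 0 with hp | hp
      · simp [hp]
      · simp [hp, Real.zero_rpow hp]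
    · rw [Real.rpow_def_of_pos hx, if_neg hx.ne', if_neg (not_lt.2 hx.le), mul_one]
  rw [h]
  refine Measurable.ite (measurableSet_eq_fun measurable_id measurable_const)
    measurable_const ?_
  exact (Real.measurable_exp.comp (Real.measurable_log.mul_const p)).mul
    (Measurable.ite (measurableSet_lt measurable_id measurable_const)
      measurable_const measurable_const)

lemma measurable_Dm (hm : -1 < m) : Measurable (Dm m) := by
  apply measurable_of_tendsto_metrizable
    (f := fun n w => ∑ k ∈ Finset.range n,
      (((k : ℝ) + Int.fract w) ^ (-(m + 1)) - ((k : ℝ) + 1 - Int.fract w) ^ (-(m + 1))))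
  · intro n
    apply Finset.measurable_sum
    intro k _
    exact ((measurable_rpow_const _).comp (measurable_fract.const_add ((k : ℝ)))).sub
      ((measurable_rpow_const _).comp (measurable_fract.const_sub ((k : ℝ) + 1)))
  · rw [tendsto_pi_nhds]
    intro w
    exact (summable_term hm w).hasSum.tendsto_sum_nat

lemma g_mem (z : ℝ) : |z - (round z : ℝ)| ∈ Set.Icc (0:ℝ) (1/2) :=
  ⟨abs_nonneg _, abs_sub_round z⟩

lemma Dm_integrableOn (hm : -1 < m) {a : ℝ} (ha : 0 < a) :
    IntegrableOn (Dm m) (Set.Ioc a (1/2 : ℝ)) := by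
  rcases le_or_gt (1/2 : ℝ) a with h | h
  · rw [Set.Ioc_eq_empty (by exact not_lt.2 h)]
    simp [IntegrableOn]
  apply Integrable.mono' (g := fun _ => a ^ (-(m+1)) + 1)
    (integrableOn_const measure_Ioc_lt_top.ne)
    (measurable_Dm hm).aestronglyMeasurable
  filter_upwards [ae_restrict_mem measurableSet_Ioc] with w hw
  have hw1 : a < w := hw.1
  have hw2 : w ≤ 1/2 := hw.2
  have h0 : 0 ≤ Dm m w := Dm_nonneg hm (by linarith) hw2
  rw [Real.norm_eq_abs, abs_of_nonneg h0]
  have h1 : Dm m w ≤ w ^ (-(m+1)) + 1 := Dm_le hm (by linarith) hw2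
  have h2 : w ^ (-(m+1)) ≤ a ^ (-(m+1)) := rpow_anti (by linarith) ha hw1.le
  linarith

lemma measurable_g : Measurable fun z : ℝ => |z - (round z : ℝ)| := by
  have : (fun z : ℝ => |z - (round z : ℝ)|) = fun z => min (Int.fract z) (1 - Int.fract z) :=
    funext fun z => abs_sub_round_eq_min z
  rw [this]
  exact measurable_fract.min (measurable_const.sub measurable_fract)

lemma stronglyMeasurable_Km (hm : -1 < m) : StronglyMeasurable (Km m) := by
  have hrw : Km m = fun z => ∫ w,
      (Set.Ioc (|z - (round z : ℝ)|) (1/2 : ℝ)).indicator (Dm m) w := by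
    funext z
    rw [integral_indicator measurableSet_Ioc]
    rfl
  rw [hrw]
  apply StronglyMeasurable.integral_prod_right'
    (f := fun q : ℝ × ℝ => (Set.Ioc (|q.1 - (round q.1 : ℝ)|) (1/2 : ℝ)).indicator (Dm m) q.2)
  have hS : MeasurableSet {q : ℝ × ℝ | |q.1 - (round q.1 : ℝ)| < q.2 ∧ q.2 ≤ 1/2} := by
    exact (measurableSet_lt (measurable_g.comp measurable_fst) measurable_snd).inter
      (measurableSet_le measurable_snd measurable_const)
  have he : (fun q : ℝ × ℝ => (Set.Ioc (|q.1 - (round q.1 : ℝ)|) (1/2 : ℝ)).indicator (Dm m) q.2)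
      = ({q : ℝ × ℝ | |q.1 - (round q.1 : ℝ)| < q.2 ∧ q.2 ≤ 1/2}).indicator
          (fun q => Dm m q.2) := by
    funext q
    simp [Set.indicator_apply, Set.mem_Ioc, Set.mem_setOf_eq]
  rw [he]
  exact (((measurable_Dm hm).comp measurable_snd).indicator hS).stronglyMeasurable

lemma g_neg (z : ℝ) : |(-z) - (round (-z) : ℝ)| = |z - (round z : ℝ)| := by
  rw [abs_sub_round_eq_min, abs_sub_round_eq_min]
  rcases eq_or_ne (Int.fract z) 0 with h | h
  · rw [Int.fract_neg_eq_zero.2 h, h]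
  · rw [Int.fract_neg h, sub_sub_cancel, min_comm]

lemma g_add_one (z : ℝ) : |(z + 1) - (round (z + 1) : ℝ)| = |z - (round z : ℝ)| := by
  rw [round_add_one]
  push_cast
  congr 1
  ring

lemma g_eq_self {z : ℝ} (h0 : 0 ≤ z) (h1 : z ≤ 1/2) : |z - (round z : ℝ)| = z := by
  rw [abs_sub_round_eq_min, Int.fract_eq_self.2 ⟨h0, by linarith⟩, min_eq_left (by linarith)]

lemma g_one_sub {z : ℝ} (h0 : 0 < z) (h1 : z < 1) :
    |(1 - z) - (round (1 - z) : ℝ)| = |z - (round z : ℝ)| := by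
  rw [abs_sub_round_eq_min, abs_sub_round_eq_min,
    Int.fract_eq_self.2 ⟨by linarith, by linarith⟩,
    Int.fract_eq_self.2 ⟨h0.le, h1⟩]
  rw [show (1:ℝ) - (1 - z) = z by ring, min_comm]

lemma g_eq_abs {z : ℝ} (h0 : -(1/2) ≤ z) (h1 : z ≤ 1/2) : |z - (round z : ℝ)| = |z| := by
  rcases le_or_gt 0 z with h | h
  · rw [g_eq_self h h1, abs_of_nonneg h]
  · rw [← g_neg, g_eq_self (by linarith) (by linarith), abs_of_neg h]

lemma Km_nonneg (hm : -1 < m) (z : ℝ) : 0 ≤ Km m z := by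
  refine setIntegral_nonneg measurableSet_Ioc fun w hw => ?_
  exact Dm_nonneg hm (lt_of_le_of_lt (abs_nonneg _) hw.1) hw.2

-- the key upper bound
lemma Km_le (hm : -1 < m) {r : ℝ} (hr : r < 0) (hq : -1 < -(m+1) - r) :
    ∃ C : ℝ, 0 ≤ C ∧ ∀ z : ℝ, 0 < |z - (round z : ℝ)| →
      Km m z ≤ C * |z - (round z : ℝ)| ^ r + 1/2 := by
  set p := -(m+1) with hpdef
  have hp : p ≤ 0 := by rw [hpdef]; linarith
  set q := p - r with hqdef
  have hq1 : -1 < q := hq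
  have hCint : IntegrableOn (fun w : ℝ => w ^ q) (Set.Ioc (0:ℝ) (1/2)) := by
    rw [← Set.uIoc_of_le (by norm_num : (0:ℝ) ≤ 1/2), ← intervalIntegrable_iff]
    exact intervalIntegral.intervalIntegrable_rpow' hq1
  refine ⟨∫ w in Set.Ioc (0:ℝ) (1/2), w ^ q, ?_, ?_⟩
  · exact setIntegral_nonneg measurableSet_Ioc fun w hw => Real.rpow_nonneg hw.1.le _
  intro z ha
  set a := |z - (round z : ℝ)| with hadef
  have ha2 : a ≤ 1/2 := abs_sub_round z
  have hrp_int : IntegrableOn (fun w : ℝ => w ^ p) (Set.Ioc a (1/2)) := by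
    rw [← Set.uIoc_of_le ha2, ← intervalIntegrable_iff]
    apply intervalIntegral.intervalIntegrable_rpow
    refine Or.inr fun hmem => ?_
    rw [Set.uIcc_of_le ha2] at hmem
    exact absurd hmem.1 (not_le.2 ha)
  have hq_int : IntegrableOn (fun w : ℝ => a ^ r * w ^ q) (Set.Ioc a (1/2)) :=
    (hCint.mono_set (Set.Ioc_subset_Ioc_left ha.le)).const_mul _
  have h1 : Km m z ≤ ∫ w in Set.Ioc a (1/2), (w ^ p + 1) := by
    apply setIntegral_mono_on (Dm_integrableOn hm ha)
      (hrp_int.add (integrableOn_const measure_Ioc_lt_top.ne))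
      measurableSet_Ioc
    intro w hw
    exact Dm_le hm (lt_of_le_of_lt (abs_nonneg _) hw.1) hw.2
  have h2 : ∫ w in Set.Ioc a (1/2), (w ^ p + 1)
      = (∫ w in Set.Ioc a (1/2), w ^ p) + ∫ w in Set.Ioc a (1/2), (1:ℝ) := by
    exact integral_add hrp_int (integrableOn_const measure_Ioc_lt_top.ne)
  have h3 : ∫ w in Set.Ioc a (1/2), (1:ℝ) ≤ 1/2 := by
    rw [setIntegral_const, Real.volume_real_Ioc_of_le ha2, smul_eq_mul, mul_one]
    linarith
  have h4 : (∫ w in Set.Ioc a (1/2), w ^ p) ≤ ∫ w in Set.Ioc a (1/2), a ^ r * w ^ q := by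
    apply setIntegral_mono_on hrp_int hq_int measurableSet_Ioc
    intro w hw
    have hw0 : 0 < w := lt_of_le_of_lt (abs_nonneg _) hw.1
    have : w ^ p = w ^ q * w ^ r := by
      rw [← Real.rpow_add hw0, hqdef]; ring_nf
    rw [this, mul_comm]
    exact mul_le_mul_of_nonneg_right (rpow_anti hr.le ha hw.1.le)
      (Real.rpow_nonneg hw0.le _)
  have h5 : ∫ w in Set.Ioc a (1/2), a ^ r * w ^ q
      = a ^ r * ∫ w in Set.Ioc a (1/2), w ^ q := integral_const_mul _ _
  have h6 : ∫ w in Set.Ioc a (1/2), w ^ q ≤ ∫ w in Set.Ioc (0:ℝ) (1/2), w ^ q := by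
    apply setIntegral_mono_set hCint
    · filter_upwards [ae_restrict_mem measurableSet_Ioc] with w hw
      exact Real.rpow_nonneg hw.1.le _
    · exact HasSubset.Subset.eventuallyLE (Set.Ioc_subset_Ioc_left ha.le)
  have har : 0 ≤ a ^ r := Real.rpow_nonneg ha.le _
  calc Km m z ≤ ∫ w in Set.Ioc a (1/2), (w ^ p + 1) := h1
    _ = (∫ w in Set.Ioc a (1/2), w ^ p) + ∫ w in Set.Ioc a (1/2), (1:ℝ) := h2
    _ ≤ a ^ r * (∫ w in Set.Ioc a (1/2), w ^ q) + 1/2 := by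
        rw [← h5]; linarith
    _ ≤ a ^ r * (∫ w in Set.Ioc (0:ℝ) (1/2), w ^ q) + 1/2 := by
        have := mul_le_mul_of_nonneg_left h6 har; linarith
    _ = (∫ w in Set.Ioc (0:ℝ) (1/2), w ^ q) * a ^ r + 1/2 := by ring

lemma abs_rpow_integrable {r : ℝ} (hr : -1 < r) :
    IntegrableOn (fun z : ℝ => |z| ^ r) (Set.Icc (-(1/2) : ℝ) (1/2)) := by
  have A : IntegrableOn (fun z : ℝ => z ^ r) (Set.Ioc (0:ℝ) (1/2)) := by
    rw [← Set.uIoc_of_le (by norm_num : (0:ℝ) ≤ 1/2), ← intervalIntegrable_iff]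
    exact intervalIntegral.intervalIntegrable_rpow' hr
  have A' : IntegrableOn (fun z : ℝ => |z| ^ r) (Set.Ioc (0:ℝ) (1/2)) :=
    A.congr_fun (fun z hz => by rw [abs_of_pos hz.1]) measurableSet_Ioc
  have J1 : IntervalIntegrable (fun z : ℝ => |z| ^ r) volume 0 (1/2) := by
    rw [intervalIntegrable_iff, Set.uIoc_of_le (by norm_num : (0:ℝ) ≤ 1/2)]
    exact A'
  have J2 : IntervalIntegrable (fun z : ℝ => |z| ^ r) volume 0 (-(1/2)) := by
    have := (IntervalIntegrable.iff_comp_neg (f := fun z : ℝ => |z| ^ r)).mp J1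
    simpa [abs_neg] using this
  have B : IntegrableOn (fun z : ℝ => |z| ^ r) (Set.Ioc (-(1/2):ℝ) 0) := by
    rw [intervalIntegrable_iff] at J2
    have : Set.uIoc (0:ℝ) (-(1/2)) = Set.Ioc (-(1/2):ℝ) 0 := by
      rw [Set.uIoc_comm, Set.uIoc_of_le (by norm_num : (-(1/2):ℝ) ≤ 0)]
    rwa [this] at J2
  have hU : IntegrableOn (fun z : ℝ => |z| ^ r) (Set.Ioc (-(1/2):ℝ) 0 ∪ Set.Ioc (0:ℝ) (1/2)) :=
    B.union A'
  have hset : Set.Ioc (-(1/2):ℝ) 0 ∪ Set.Ioc (0:ℝ) (1/2) = Set.Ioc (-(1/2):ℝ) (1/2) :=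
    Set.Ioc_union_Ioc_eq_Ioc (by norm_num) (by norm_num)
  rw [hset] at hU
  rwa [integrableOn_Icc_iff_integrableOn_Ioc]


end helpers_stmt6

lemma strictAnti_Km (hm : -1 < m) : StrictAntiOn (Km m) (Set.Ioo (0 : ℝ) (1/2)) := by
  intro z1 h1 z2 h2 h12
  set p := -(m+1) with hpdef
  have hp : p < 0 := by rw [hpdef]; linarith
  have e1 : |z1 - (round z1 : ℝ)| = z1 := g_eq_self h1.1.le h1.2.le
  have e2 : |z2 - (round z2 : ℝ)| = z2 := g_eq_self h2.1.le h2.2.le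
  have hsub1 : Set.Ioc z1 z2 ⊆ Set.Ioc z1 (1/2 : ℝ) := Set.Ioc_subset_Ioc_right h2.2.le
  have hsub2 : Set.Ioc z2 (1/2:ℝ) ⊆ Set.Ioc z1 (1/2 : ℝ) := Set.Ioc_subset_Ioc_left h12.le
  have hint1 : IntegrableOn (Dm m) (Set.Ioc z1 (1/2:ℝ)) := Dm_integrableOn hm h1.1
  have hu : Set.Ioc z1 (1/2:ℝ) = Set.Ioc z1 z2 ∪ Set.Ioc z2 (1/2:ℝ) :=
    (Set.Ioc_union_Ioc_eq_Ioc h12.le h2.2.le).symm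
  have hKm1 : Km m z1 = (∫ w in Set.Ioc z1 z2, Dm m w) + ∫ w in Set.Ioc z2 (1/2:ℝ), Dm m w := by
    rw [Km, e1, hu]
    exact setIntegral_union (Set.Ioc_disjoint_Ioc_of_le le_rfl) measurableSet_Ioc
      (hint1.mono_set hsub1) (hint1.mono_set hsub2)
  have hKm2 : Km m z2 = ∫ w in Set.Ioc z2 (1/2:ℝ), Dm m w := by rw [Km, e2]
  set c := z2 ^ p - (1 - z2) ^ p with hcdef
  have hc : 0 < c := by
    have := Real.rpow_lt_rpow_of_neg (x := z2) (y := 1 - z2) h2.1 (by linarith [h2.2]) hp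
    rw [hcdef]; linarith
  have hlow : (∫ w in Set.Ioc z1 z2, (fun _ => c) w) ≤ ∫ w in Set.Ioc z1 z2, Dm m w := by
    apply setIntegral_mono_on (integrableOn_const measure_Ioc_lt_top.ne)
      (hint1.mono_set hsub1) measurableSet_Ioc
    intro w hw
    have hw0 : 0 < w := lt_trans h1.1 hw.1
    have hw2 : w < 1/2 := lt_of_le_of_lt hw.2 h2.2
    have ha1 : z2 ^ p ≤ w ^ p := rpow_anti hp.le hw0 hw.2
    have ha2 : (1 - w) ^ p ≤ (1 - z2) ^ p :=
      rpow_anti hp.le (by linarith [h2.2]) (by linarith [hw.2])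
    have := le_Dm hm hw0 hw2
    rw [hcdef]; linarith
  have hconst : (∫ w in Set.Ioc z1 z2, (fun _ => c) w) = (z2 - z1) * c := by
    rw [setIntegral_const, Real.volume_real_Ioc_of_le h12.le, smul_eq_mul]
  have hposc : 0 < (z2 - z1) * c := mul_pos (by linarith) hc
  rw [hKm1, hKm2]
  rw [hconst] at hlow
  linarith

theorem stmt_6 (m : ℝ) (hm : -1 < m) (hm' : m < 1) :
    (∀ w ∈ Set.Ioo (0 : ℝ) 1,
      Summable (fun k : ℕ =>
        |((k : ℝ) + w) ^ (-(m + 1)) - ((k : ℝ) + 1 - w) ^ (-(m + 1))|)) ∧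
    (∀ w ∈ Set.Ioo (0 : ℝ) (1/2), 0 < Dm m w) ∧
    (∀ z : ℝ, 0 ≤ Km m z) ∧
    (∀ z : ℝ, Km m (-z) = Km m z) ∧
    (∀ z : ℝ, Km m (z + 1) = Km m z) ∧
    StrictAntiOn (Km m) (Set.Ioo (0 : ℝ) (1/2)) ∧
    (∀ z ∈ Set.Ioo (0 : ℝ) 1, Km m z = Km m (1 - z)) ∧
    IntegrableOn (Km m) Omega ∧
    (m ≤ 0 → MemLp (Km m) 2 (volume.restrict Omega)) := by
  have hKmAESM : AEStronglyMeasurable (Km m) (volume.restrict Omega) :=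
    (stronglyMeasurable_Km hm).aestronglyMeasurable
  have hΩmeas : MeasurableSet Omega := measurableSet_Icc
  -- a.e. facts on Omega
  have hae0 : ∀ᵐ z ∂(volume.restrict Omega), z ≠ 0 := by
    refine ae_restrict_of_ae ?_
    rw [ae_iff]
    simp only [ne_eq, not_not]
    rw [show {a : ℝ | a = 0} = {(0:ℝ)} by ext x; simp]
    exact measure_singleton 0
  have haeΩ : ∀ᵐ z ∂(volume.restrict Omega), z ∈ Omega := ae_restrict_mem hΩmeas
  -- integrability part
  have Hint : IntegrableOn (Km m) Omega := by
    have hr : (-(1+m)/2 : ℝ) < 0 := by linarith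
    have hq : (-1 : ℝ) < -(m+1) - (-(1+m)/2) := by linarith
    obtain ⟨C, hC0, hC⟩ := Km_le hm hr hq
    have hmaj : IntegrableOn (fun z : ℝ => C * |z| ^ (-(1+m)/2) + 1/2) Omega := by
      exact ((abs_rpow_integrable (by linarith)).const_mul C).add
        (integrableOn_const (by rw [Real.volume_Icc]; exact ENNReal.ofReal_ne_top))
    apply Integrable.mono' hmaj hKmAESM
    filter_upwards [hae0, haeΩ] with z hz hzΩ
    rw [Real.norm_eq_abs, abs_of_nonneg (Km_nonneg hm z)]
    have hg : |z - (round z : ℝ)| = |z| := g_eq_abs hzΩ.1 hzΩ.2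
    have : Km m z ≤ C * |z - (round z : ℝ)| ^ (-(1+m)/2) + 1/2 :=
      hC z (by rw [hg]; exact abs_pos.2 hz)
    rwa [hg] at this
  refine ⟨?_, ?_, fun z => Km_nonneg hm z, ?_, ?_, strictAnti_Km hm, ?_, Hint, ?_⟩
  · exact fun w hw => abs_summable_gen hm hw.1 hw.2
  · exact fun w hw => Dm_pos hm hw.1 hw.2
  · intro z
    rw [Km, Km, g_neg]
  · intro z
    rw [Km, Km, g_add_one]
  · intro z hz
    rw [Km, Km, g_one_sub hz.1 hz.2]
  · -- L² part
    intro hm0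
    rw [memLp_two_iff_integrable_sq hKmAESM]
    have hr : (-(1/4) : ℝ) < 0 := by norm_num
    have hq : (-1 : ℝ) < -(m+1) - (-(1/4)) := by linarith
    obtain ⟨C, hC0, hC⟩ := Km_le hm hr hq
    have hmaj : IntegrableOn (fun z : ℝ => 2 * C ^ 2 * |z| ^ (-(1/2) : ℝ) + 1/2) Omega := by
      exact ((abs_rpow_integrable (by norm_num)).const_mul _).add
        (integrableOn_const (by rw [Real.volume_Icc]; exact ENNReal.ofReal_ne_top))
    apply Integrable.mono' hmaj
    · exact (((stronglyMeasurable_Km hm).measurable.pow_const 2).aestronglyMeasurable)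
    filter_upwards [hae0, haeΩ] with z hz hzΩ
    have hg : |z - (round z : ℝ)| = |z| := g_eq_abs hzΩ.1 hzΩ.2
    have hb : Km m z ≤ C * |z| ^ (-(1/4) : ℝ) + 1/2 := by
      have := hC z (by rw [hg]; exact abs_pos.2 hz)
      rwa [hg] at this
    have h0 : 0 ≤ Km m z := Km_nonneg hm z
    rw [Real.norm_eq_abs, abs_of_nonneg (pow_nonneg h0 2)]
    have hsq : Km m z ^ 2 ≤ (C * |z| ^ (-(1/4) : ℝ) + 1/2) ^ 2 :=
      pow_le_pow_left₀ h0 hb 2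
    have habs : (0:ℝ) < |z| := abs_pos.2 hz
    have hrw : (|z| ^ (-(1/4) : ℝ)) ^ 2 = |z| ^ (-(1/2) : ℝ) := by
      rw [sq, ← Real.rpow_add habs]
      norm_num
    have hx : (0:ℝ) ≤ C * |z| ^ (-(1/4) : ℝ) :=
      mul_nonneg hC0 (Real.rpow_nonneg habs.le _)
    have hexp : (C * |z| ^ (-(1/4) : ℝ) + 1/2) ^ 2
        ≤ 2 * (C * |z| ^ (-(1/4) : ℝ)) ^ 2 + 2 * (1/2 : ℝ) ^ 2 := by
      nlinarith [sq_nonneg (C * |z| ^ (-(1/4) : ℝ) - 1/2)]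
    have : (C * |z| ^ (-(1/4) : ℝ)) ^ 2 = C ^ 2 * |z| ^ (-(1/2) : ℝ) := by
      rw [mul_pow, hrw]
    nlinarith [hsq, hexp]
end
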